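/- The set of roots in L is a single orbit of the Weyl group W_6: an element x of L is a root if and only if there exists w ∈ W_6 with w(e_1 − e_2) = x. -/
import Mathlib


/-- The intersection form on the divisor class lattice `L = Fin 7 → ℤ`:
`⟨x, y⟩ = x₀y₀ − x₁y₁ − ⋯ − x₆y₆`. -/
def form (x y : Fin 7 → ℤ) : ℤ :=
  x 0 * y 0 - x 1 * y 1 - x 2 * y 2 - x 3 * y 3 - x 4 * y 4 - x 5 * y 5 - x 6 * y 6

/-- The standard basis vectors `e 0, …, e 6` of `L`. -/
def e (i : Fin 7) : Fin 7 → ℤ := fun j => if j = i then 1 else 0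

/-- The anticanonical class `κ = 3e₀ − e₁ − ⋯ − e₆`. -/
def kappa : Fin 7 → ℤ := (3 : ℤ) • e 0 - e 1 - e 2 - e 3 - e 4 - e 5 - e 6

/-- The simple roots `r₀ = e₀ − e₁ − e₂ − e₃` and `rᵢ = eᵢ − e_{i+1}` for `1 ≤ i ≤ 5`. -/
def r : Fin 6 → (Fin 7 → ℤ) :=
  ![e 0 - e 1 - e 2 - e 3, e 1 - e 2, e 2 - e 3, e 3 - e 4, e 4 - e 5, e 5 - e 6]

lemma form_add_left (x y v : Fin 7 → ℤ) : form (x + y) v = form x v + form y v := by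
  simp only [form, Pi.add_apply]; ring

lemma form_smul_left (c : ℤ) (x v : Fin 7 → ℤ) : form (c • x) v = c * form x v := by
  simp only [form, Pi.smul_apply, smul_eq_mul]; ring

/-- The reflection `x ↦ x + ⟨x, v⟩·v` as a ℤ-linear map. -/
def reflMap (v : Fin 7 → ℤ) : (Fin 7 → ℤ) →ₗ[ℤ] (Fin 7 → ℤ) where
  toFun x := x + form x v • v
  map_add' x y := by
    funext j
    simp only [form, Pi.add_apply, Pi.smul_apply, smul_eq_mul]
    ring
  map_smul' c x := by
    funext j
    simp only [form, Pi.add_apply, Pi.smul_apply, smul_eq_mul, RingHom.id_apply]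
    ring

lemma reflMap_invol (v : Fin 7 → ℤ) (hv : form v v = -2) (x : Fin 7 → ℤ) :
    reflMap v (reflMap v x) = x := by
  show (x + form x v • v) + form (x + form x v • v) v • v = x
  rw [form_add_left, form_smul_left, hv]
  module

/-- The reflection `sᵢ(x) = x + ⟨x, rᵢ⟩·rᵢ` through the simple root `rᵢ`,
as a ℤ-linear automorphism of `L`. -/
def s (i : Fin 6) : (Fin 7 → ℤ) ≃ₗ[ℤ] (Fin 7 → ℤ) :=
  LinearEquiv.ofLinear (reflMap (r i)) (reflMap (r i))
    (LinearMap.ext fun x => reflMap_invol (r i) (by fin_cases i <;> decide) x)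
    (LinearMap.ext fun x => reflMap_invol (r i) (by fin_cases i <;> decide) x)

/-- The Weyl group `W₆`: the subgroup of the group of ℤ-linear automorphisms of `L`
generated by the reflections `s₀, …, s₅`. -/
def W6 : Subgroup ((Fin 7 → ℤ) ≃ₗ[ℤ] (Fin 7 → ℤ)) :=
  Subgroup.closure (Set.range s)

lemma form_expand (a b v : Fin 7 → ℤ) (c d : ℤ) :
    form (a + c•v) (b + d•v) = form a b + d * form a v + c * form v b + c*d*form v v := by
  simp only [form, Pi.add_apply, Pi.smul_apply, smul_eq_mul]; ring

lemma form_symm (a b : Fin 7 → ℤ) : form a b = form b a := by simp only [form]; ring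

lemma s_apply (i : Fin 6) (a : Fin 7 → ℤ) : (s i) a = a + form a (r i) • r i := rfl

lemma s_form (i : Fin 6) (a b : Fin 7 → ℤ) : form ((s i) a) ((s i) b) = form a b := by
  have hrr : form (r i) (r i) = -2 := by fin_cases i <;> decide
  rw [s_apply, s_apply, form_expand, hrr, form_symm (r i) b]; ring

lemma s_kappa (i : Fin 6) : (s i) kappa = kappa := by fin_cases i <;> decide

lemma w6_inv : ∀ w ∈ W6, w kappa = kappa ∧ ∀ a b, form (w a) (w b) = form a b := by
  intro w hw
  refine Subgroup.closure_induction ?_ ?_ ?_ ?_ hw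
  · rintro g ⟨i, rfl⟩
    exact ⟨s_kappa i, s_form i⟩
  · exact ⟨rfl, fun a b => rfl⟩
  · rintro u v hu hv ⟨hu1, hu2⟩ ⟨hv1, hv2⟩
    refine ⟨?_, fun a b => ?_⟩
    · show u (v kappa) = kappa; rw [hv1, hu1]
    · show form (u (v a)) (u (v b)) = _; rw [hu2, hv2]
  · rintro u hu ⟨hu1, hu2⟩
    have e1 : ∀ a, u (u⁻¹ a) = a := fun a => u.apply_symm_apply a
    refine ⟨?_, fun a b => ?_⟩
    · conv_lhs => rw [← hu1]
      exact u.symm_apply_apply kappa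
    · have h2 := hu2 (u⁻¹ a) (u⁻¹ b)
      rw [e1, e1] at h2
      exact h2.symm
def rootsList : List (Fin 7 → ℤ) := [
  ![0,1,-1,0,0,0,0],
  ![0,-1,1,0,0,0,0],
  ![0,1,0,-1,0,0,0],
  ![0,-1,0,1,0,0,0],
  ![0,0,1,-1,0,0,0],
  ![0,1,0,0,-1,0,0],
  ![0,0,-1,1,0,0,0],
  ![0,-1,0,0,1,0,0],
  ![0,0,1,0,-1,0,0],
  ![1,0,-1,-1,-1,0,0],
  ![0,1,0,0,0,-1,0],
  ![0,0,-1,0,1,0,0],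
  ![-1,0,1,1,1,0,0],
  ![0,-1,0,0,0,1,0],
  ![1,-1,0,-1,-1,0,0],
  ![0,0,0,1,-1,0,0],
  ![0,0,1,0,0,-1,0],
  ![1,0,-1,-1,0,-1,0],
  ![0,1,0,0,0,0,-1],
  ![-1,1,0,1,1,0,0],
  ![0,0,0,-1,1,0,0],
  ![0,0,-1,0,0,1,0],
  ![-1,0,1,1,0,1,0],
  ![0,-1,0,0,0,0,1],
  ![1,-1,-1,0,-1,0,0],
  ![1,-1,0,-1,0,-1,0],
  ![0,0,0,1,0,-1,0],
  ![0,0,1,0,0,0,-1],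
  ![1,0,-1,0,-1,-1,0],
  ![1,0,-1,-1,0,0,-1],
  ![-1,1,1,0,1,0,0],
  ![-1,1,0,1,0,1,0],
  ![0,0,0,-1,0,1,0],
  ![0,0,-1,0,0,0,1],
  ![-1,0,1,0,1,1,0],
  ![-1,0,1,1,0,0,1],
  ![1,-1,-1,-1,0,0,0],
  ![1,-1,-1,0,0,-1,0],
  ![1,-1,0,0,-1,-1,0],
  ![1,-1,0,-1,0,0,-1],
  ![0,0,0,0,1,-1,0],
  ![0,0,0,1,0,0,-1],
  ![1,0,0,-1,-1,-1,0],
  ![1,0,-1,0,-1,0,-1],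
  ![-1,1,1,1,0,0,0],
  ![-1,1,1,0,0,1,0],
  ![-1,1,0,0,1,1,0],
  ![-1,1,0,1,0,0,1],
  ![0,0,0,0,-1,1,0],
  ![0,0,0,-1,0,0,1],
  ![-1,0,0,1,1,1,0],
  ![-1,0,1,0,1,0,1],
  ![1,-1,-1,0,0,0,-1],
  ![1,-1,0,0,-1,0,-1],
  ![0,0,0,0,1,0,-1],
  ![1,0,0,-1,-1,0,-1],
  ![1,0,-1,0,0,-1,-1],
  ![-1,1,1,0,0,0,1],
  ![-1,1,0,0,1,0,1],
  ![0,0,0,0,-1,0,1],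
  ![-1,0,0,1,1,0,1],
  ![-1,0,1,0,0,1,1],
  ![1,-1,0,0,0,-1,-1],
  ![0,0,0,0,0,1,-1],
  ![1,0,0,-1,0,-1,-1],
  ![-1,1,0,0,0,1,1],
  ![0,0,0,0,0,-1,1],
  ![-1,0,0,1,0,1,1],
  ![1,0,0,0,-1,-1,-1],
  ![-1,0,0,0,1,1,1],
  ![2,-1,-1,-1,-1,-1,-1],
  ![-2,1,1,1,1,1,1]]

def Orbit (x : Fin 7 → ℤ) : Prop := ∃ w ∈ W6, w (e 1 - e 2) = x

lemma orbit_rho : Orbit ![0,1,-1,0,0,0,0] := ⟨1, one_mem _, by decide⟩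

lemma orbit_s (i : Fin 6) {x : Fin 7 → ℤ} (h : Orbit x) : Orbit ((s i) x) := by
  obtain ⟨w, hw, hwx⟩ := h
  exact ⟨s i * w, mul_mem (Subgroup.subset_closure ⟨i, rfl⟩) hw, by rw [show (s i * w) (e 1 - e 2) = (s i) (w (e 1 - e 2)) from rfl, hwx]⟩

lemma orbit_eq {x y : Fin 7 → ℤ} (h : Orbit x) (e : x = y) : Orbit y := e ▸ h
lemma all_orbit : ∀ y ∈ rootsList, Orbit y := by
  have h0 : Orbit ![0,1,-1,0,0,0,0] := orbit_rho
  have h1 : Orbit ![0,-1,1,0,0,0,0] := orbit_eq (orbit_s 1 h0) (by decide)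
  have h2 : Orbit ![0,1,0,-1,0,0,0] := orbit_eq (orbit_s 2 h0) (by decide)
  have h3 : Orbit ![0,-1,0,1,0,0,0] := orbit_eq (orbit_s 2 h1) (by decide)
  have h4 : Orbit ![0,0,1,-1,0,0,0] := orbit_eq (orbit_s 1 h2) (by decide)
  have h5 : Orbit ![0,1,0,0,-1,0,0] := orbit_eq (orbit_s 3 h2) (by decide)
  have h6 : Orbit ![0,0,-1,1,0,0,0] := orbit_eq (orbit_s 1 h3) (by decide)
  have h7 : Orbit ![0,-1,0,0,1,0,0] := orbit_eq (orbit_s 3 h3) (by decide)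
  have h8 : Orbit ![0,0,1,0,-1,0,0] := orbit_eq (orbit_s 3 h4) (by decide)
  have h9 : Orbit ![1,0,-1,-1,-1,0,0] := orbit_eq (orbit_s 0 h5) (by decide)
  have h10 : Orbit ![0,1,0,0,0,-1,0] := orbit_eq (orbit_s 4 h5) (by decide)
  have h11 : Orbit ![0,0,-1,0,1,0,0] := orbit_eq (orbit_s 3 h6) (by decide)
  have h12 : Orbit ![-1,0,1,1,1,0,0] := orbit_eq (orbit_s 0 h7) (by decide)
  have h13 : Orbit ![0,-1,0,0,0,1,0] := orbit_eq (orbit_s 4 h7) (by decide)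
  have h14 : Orbit ![1,-1,0,-1,-1,0,0] := orbit_eq (orbit_s 0 h8) (by decide)
  have h15 : Orbit ![0,0,0,1,-1,0,0] := orbit_eq (orbit_s 2 h8) (by decide)
  have h16 : Orbit ![0,0,1,0,0,-1,0] := orbit_eq (orbit_s 4 h8) (by decide)
  have h17 : Orbit ![1,0,-1,-1,0,-1,0] := orbit_eq (orbit_s 4 h9) (by decide)
  have h18 : Orbit ![0,1,0,0,0,0,-1] := orbit_eq (orbit_s 5 h10) (by decide)
  have h19 : Orbit ![-1,1,0,1,1,0,0] := orbit_eq (orbit_s 0 h11) (by decide)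
  have h20 : Orbit ![0,0,0,-1,1,0,0] := orbit_eq (orbit_s 2 h11) (by decide)
  have h21 : Orbit ![0,0,-1,0,0,1,0] := orbit_eq (orbit_s 4 h11) (by decide)
  have h22 : Orbit ![-1,0,1,1,0,1,0] := orbit_eq (orbit_s 4 h12) (by decide)
  have h23 : Orbit ![0,-1,0,0,0,0,1] := orbit_eq (orbit_s 5 h13) (by decide)
  have h24 : Orbit ![1,-1,-1,0,-1,0,0] := orbit_eq (orbit_s 2 h14) (by decide)
  have h25 : Orbit ![1,-1,0,-1,0,-1,0] := orbit_eq (orbit_s 4 h14) (by decide)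
  have h26 : Orbit ![0,0,0,1,0,-1,0] := orbit_eq (orbit_s 4 h15) (by decide)
  have h27 : Orbit ![0,0,1,0,0,0,-1] := orbit_eq (orbit_s 5 h16) (by decide)
  have h28 : Orbit ![1,0,-1,0,-1,-1,0] := orbit_eq (orbit_s 3 h17) (by decide)
  have h29 : Orbit ![1,0,-1,-1,0,0,-1] := orbit_eq (orbit_s 5 h17) (by decide)
  have h30 : Orbit ![-1,1,1,0,1,0,0] := orbit_eq (orbit_s 2 h19) (by decide)
  have h31 : Orbit ![-1,1,0,1,0,1,0] := orbit_eq (orbit_s 4 h19) (by decide)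
  have h32 : Orbit ![0,0,0,-1,0,1,0] := orbit_eq (orbit_s 4 h20) (by decide)
  have h33 : Orbit ![0,0,-1,0,0,0,1] := orbit_eq (orbit_s 5 h21) (by decide)
  have h34 : Orbit ![-1,0,1,0,1,1,0] := orbit_eq (orbit_s 3 h22) (by decide)
  have h35 : Orbit ![-1,0,1,1,0,0,1] := orbit_eq (orbit_s 5 h22) (by decide)
  have h36 : Orbit ![1,-1,-1,-1,0,0,0] := orbit_eq (orbit_s 3 h24) (by decide)
  have h37 : Orbit ![1,-1,-1,0,0,-1,0] := orbit_eq (orbit_s 4 h24) (by decide)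
  have h38 : Orbit ![1,-1,0,0,-1,-1,0] := orbit_eq (orbit_s 3 h25) (by decide)
  have h39 : Orbit ![1,-1,0,-1,0,0,-1] := orbit_eq (orbit_s 5 h25) (by decide)
  have h40 : Orbit ![0,0,0,0,1,-1,0] := orbit_eq (orbit_s 3 h26) (by decide)
  have h41 : Orbit ![0,0,0,1,0,0,-1] := orbit_eq (orbit_s 5 h26) (by decide)
  have h42 : Orbit ![1,0,0,-1,-1,-1,0] := orbit_eq (orbit_s 2 h28) (by decide)
  have h43 : Orbit ![1,0,-1,0,-1,0,-1] := orbit_eq (orbit_s 5 h28) (by decide)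
  have h44 : Orbit ![-1,1,1,1,0,0,0] := orbit_eq (orbit_s 3 h30) (by decide)
  have h45 : Orbit ![-1,1,1,0,0,1,0] := orbit_eq (orbit_s 4 h30) (by decide)
  have h46 : Orbit ![-1,1,0,0,1,1,0] := orbit_eq (orbit_s 3 h31) (by decide)
  have h47 : Orbit ![-1,1,0,1,0,0,1] := orbit_eq (orbit_s 5 h31) (by decide)
  have h48 : Orbit ![0,0,0,0,-1,1,0] := orbit_eq (orbit_s 3 h32) (by decide)
  have h49 : Orbit ![0,0,0,-1,0,0,1] := orbit_eq (orbit_s 5 h32) (by decide)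
  have h50 : Orbit ![-1,0,0,1,1,1,0] := orbit_eq (orbit_s 2 h34) (by decide)
  have h51 : Orbit ![-1,0,1,0,1,0,1] := orbit_eq (orbit_s 5 h34) (by decide)
  have h52 : Orbit ![1,-1,-1,0,0,0,-1] := orbit_eq (orbit_s 5 h37) (by decide)
  have h53 : Orbit ![1,-1,0,0,-1,0,-1] := orbit_eq (orbit_s 5 h38) (by decide)
  have h54 : Orbit ![0,0,0,0,1,0,-1] := orbit_eq (orbit_s 5 h40) (by decide)
  have h55 : Orbit ![1,0,0,-1,-1,0,-1] := orbit_eq (orbit_s 5 h42) (by decide)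
  have h56 : Orbit ![1,0,-1,0,0,-1,-1] := orbit_eq (orbit_s 4 h43) (by decide)
  have h57 : Orbit ![-1,1,1,0,0,0,1] := orbit_eq (orbit_s 5 h45) (by decide)
  have h58 : Orbit ![-1,1,0,0,1,0,1] := orbit_eq (orbit_s 5 h46) (by decide)
  have h59 : Orbit ![0,0,0,0,-1,0,1] := orbit_eq (orbit_s 5 h48) (by decide)
  have h60 : Orbit ![-1,0,0,1,1,0,1] := orbit_eq (orbit_s 5 h50) (by decide)
  have h61 : Orbit ![-1,0,1,0,0,1,1] := orbit_eq (orbit_s 4 h51) (by decide)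
  have h62 : Orbit ![1,-1,0,0,0,-1,-1] := orbit_eq (orbit_s 4 h53) (by decide)
  have h63 : Orbit ![0,0,0,0,0,1,-1] := orbit_eq (orbit_s 4 h54) (by decide)
  have h64 : Orbit ![1,0,0,-1,0,-1,-1] := orbit_eq (orbit_s 4 h55) (by decide)
  have h65 : Orbit ![-1,1,0,0,0,1,1] := orbit_eq (orbit_s 4 h58) (by decide)
  have h66 : Orbit ![0,0,0,0,0,-1,1] := orbit_eq (orbit_s 4 h59) (by decide)
  have h67 : Orbit ![-1,0,0,1,0,1,1] := orbit_eq (orbit_s 4 h60) (by decide)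
  have h68 : Orbit ![1,0,0,0,-1,-1,-1] := orbit_eq (orbit_s 3 h64) (by decide)
  have h69 : Orbit ![-1,0,0,0,1,1,1] := orbit_eq (orbit_s 3 h67) (by decide)
  have h70 : Orbit ![2,-1,-1,-1,-1,-1,-1] := orbit_eq (orbit_s 0 h68) (by decide)
  have h71 : Orbit ![-2,1,1,1,1,1,1] := orbit_eq (orbit_s 0 h69) (by decide)
  intro y hy
  fin_cases hy
  exacts [h0,h1,h2,h3,h4,h5,h6,h7,h8,h9,h10,h11,h12,h13,h14,h15,h16,h17,h18,h19,h20,h21,h22,h23,h24,h25,h26,h27,h28,h29,h30,h31,h32,h33,h34,h35,h36,h37,h38,h39,h40,h41,h42,h43,h44,h45,h46,h47,h48,h49,h50,h51,h52,h53,h54,h55,h56,h57,h58,h59,h60,h61,h62,h63,h64,h65,h66,h67,h68,h69,h70,h71]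

set_option maxRecDepth 8000 in
set_option maxHeartbeats 1000000 in
lemma key : ∀ a b c d f g : Fin 5,
    ((a:ℤ)-2)*((a:ℤ)-2) - ((b:ℤ)-2)*((b:ℤ)-2) - ((c:ℤ)-2)*((c:ℤ)-2) - ((d:ℤ)-2)*((d:ℤ)-2)
      - ((f:ℤ)-2)*((f:ℤ)-2) - ((g:ℤ)-2)*((g:ℤ)-2)
      - (-(3*((a:ℤ)-2)+((b:ℤ)-2)+((c:ℤ)-2)+((d:ℤ)-2)+((f:ℤ)-2)+((g:ℤ)-2)))*(-(3*((a:ℤ)-2)+((b:ℤ)-2)+((c:ℤ)-2)+((d:ℤ)-2)+((f:ℤ)-2)+((g:ℤ)-2))) = -2 →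
    (![ (a:ℤ)-2, (b:ℤ)-2, (c:ℤ)-2, (d:ℤ)-2, (f:ℤ)-2, (g:ℤ)-2,
        -(3*((a:ℤ)-2)+((b:ℤ)-2)+((c:ℤ)-2)+((d:ℤ)-2)+((f:ℤ)-2)+((g:ℤ)-2))] : Fin 7 → ℤ) ∈ rootsList := by
  decide


set_option maxHeartbeats 2000000 in
lemma key' (x0 x1 x2 x3 x4 x5 : ℤ)
    (b0l : -2 ≤ x0) (b0r : x0 ≤ 2) (b1l : -2 ≤ x1) (b1r : x1 ≤ 2)
    (b2l : -2 ≤ x2) (b2r : x2 ≤ 2) (b3l : -2 ≤ x3) (b3r : x3 ≤ 2)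
    (b4l : -2 ≤ x4) (b4r : x4 ≤ 2) (b5l : -2 ≤ x5) (b5r : x5 ≤ 2)
    (hf : x0*x0 - x1*x1 - x2*x2 - x3*x3 - x4*x4 - x5*x5
      - (-(3*x0+x1+x2+x3+x4+x5))*(-(3*x0+x1+x2+x3+x4+x5)) = -2) :
    (![x0, x1, x2, x3, x4, x5, -(3*x0+x1+x2+x3+x4+x5)] : Fin 7 → ℤ) ∈ rootsList := by
  obtain ⟨a, ha⟩ : ∃ a : Fin 5, (a:ℤ) - 2 = x0 :=
    ⟨⟨(x0+2).toNat, by omega⟩, by show ((x0+2).toNat : ℤ) - 2 = x0; omega⟩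
  obtain ⟨b, hb⟩ : ∃ b : Fin 5, (b:ℤ) - 2 = x1 :=
    ⟨⟨(x1+2).toNat, by omega⟩, by show ((x1+2).toNat : ℤ) - 2 = x1; omega⟩
  obtain ⟨c, hc⟩ : ∃ c : Fin 5, (c:ℤ) - 2 = x2 :=
    ⟨⟨(x2+2).toNat, by omega⟩, by show ((x2+2).toNat : ℤ) - 2 = x2; omega⟩
  obtain ⟨d, hd⟩ : ∃ d : Fin 5, (d:ℤ) - 2 = x3 :=
    ⟨⟨(x3+2).toNat, by omega⟩, by show ((x3+2).toNat : ℤ) - 2 = x3; omega⟩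
  obtain ⟨f, hff⟩ : ∃ f : Fin 5, (f:ℤ) - 2 = x4 :=
    ⟨⟨(x4+2).toNat, by omega⟩, by show ((x4+2).toNat : ℤ) - 2 = x4; omega⟩
  obtain ⟨g, hg⟩ : ∃ g : Fin 5, (g:ℤ) - 2 = x5 :=
    ⟨⟨(x5+2).toNat, by omega⟩, by show ((x5+2).toNat : ℤ) - 2 = x5; omega⟩
  have h2 := key a b c d f g
  rw [ha, hb, hc, hd, hff, hg] at h2
  exact h2 hf

set_option maxHeartbeats 4000000 in
/-- The set of roots is a single `W₆`-orbit: `x` is a root iff `x = w(e₁ − e₂)`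
for some `w ∈ W₆`. -/
theorem statement_14 (x : Fin 7 → ℤ) :
    (form x x = -2 ∧ form x kappa = 0) ↔ ∃ w ∈ W6, w (e 1 - e 2) = x := by
  constructor
  · rintro ⟨h, hk⟩
    have h' : x 0 * x 0 - x 1 * x 1 - x 2 * x 2 - x 3 * x 3 - x 4 * x 4 - x 5 * x 5
        - x 6 * x 6 = -2 := h
    have hk2 : form x kappa = 3 * x 0 + x 1 + x 2 + x 3 + x 4 + x 5 + x 6 := by
      simp [form, kappa, e]; ring
    rw [hk2] at hk
    have hsum : (x 1 + x 2 + x 3 + x 4 + x 5 + x 6) = -3 * x 0 := by linarith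
    have hs2 : (x 1 + x 2 + x 3 + x 4 + x 5 + x 6) * (x 1 + x 2 + x 3 + x 4 + x 5 + x 6)
        = 9 * (x 0 * x 0) := by rw [hsum]; ring
    have h0sq : x 0 * x 0 ≤ 4 := by
      linarith [h', hs2, sq_nonneg (x 1 - x 2), sq_nonneg (x 1 - x 3), sq_nonneg (x 1 - x 4),
        sq_nonneg (x 1 - x 5), sq_nonneg (x 1 - x 6), sq_nonneg (x 2 - x 3), sq_nonneg (x 2 - x 4),
        sq_nonneg (x 2 - x 5), sq_nonneg (x 2 - x 6), sq_nonneg (x 3 - x 4), sq_nonneg (x 3 - x 5),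
        sq_nonneg (x 3 - x 6), sq_nonneg (x 4 - x 5), sq_nonneg (x 4 - x 6), sq_nonneg (x 5 - x 6)]
    have q1 : x 1 * x 1 ≤ 6 := by
      linarith [h', h0sq, mul_self_nonneg (x 2), mul_self_nonneg (x 3), mul_self_nonneg (x 4),
        mul_self_nonneg (x 5), mul_self_nonneg (x 6)]
    have q2 : x 2 * x 2 ≤ 6 := by
      linarith [h', h0sq, mul_self_nonneg (x 1), mul_self_nonneg (x 3), mul_self_nonneg (x 4),
        mul_self_nonneg (x 5), mul_self_nonneg (x 6)]
    have q3 : x 3 * x 3 ≤ 6 := by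
      linarith [h', h0sq, mul_self_nonneg (x 1), mul_self_nonneg (x 2), mul_self_nonneg (x 4),
        mul_self_nonneg (x 5), mul_self_nonneg (x 6)]
    have q4 : x 4 * x 4 ≤ 6 := by
      linarith [h', h0sq, mul_self_nonneg (x 1), mul_self_nonneg (x 2), mul_self_nonneg (x 3),
        mul_self_nonneg (x 5), mul_self_nonneg (x 6)]
    have q5 : x 5 * x 5 ≤ 6 := by
      linarith [h', h0sq, mul_self_nonneg (x 1), mul_self_nonneg (x 2), mul_self_nonneg (x 3),
        mul_self_nonneg (x 4), mul_self_nonneg (x 6)]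
    have b0l : -2 ≤ x 0 := by nlinarith [h0sq, mul_self_nonneg (x 0 + 3)]
    have b0r : x 0 ≤ 2 := by nlinarith [h0sq, mul_self_nonneg (x 0 - 3)]
    have b1l : -2 ≤ x 1 := by nlinarith [q1, mul_self_nonneg (x 1 + 3)]
    have b1r : x 1 ≤ 2 := by nlinarith [q1, mul_self_nonneg (x 1 - 3)]
    have b2l : -2 ≤ x 2 := by nlinarith [q2, mul_self_nonneg (x 2 + 3)]
    have b2r : x 2 ≤ 2 := by nlinarith [q2, mul_self_nonneg (x 2 - 3)]
    have b3l : -2 ≤ x 3 := by nlinarith [q3, mul_self_nonneg (x 3 + 3)]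
    have b3r : x 3 ≤ 2 := by nlinarith [q3, mul_self_nonneg (x 3 - 3)]
    have b4l : -2 ≤ x 4 := by nlinarith [q4, mul_self_nonneg (x 4 + 3)]
    have b4r : x 4 ≤ 2 := by nlinarith [q4, mul_self_nonneg (x 4 - 3)]
    have b5l : -2 ≤ x 5 := by nlinarith [q5, mul_self_nonneg (x 5 + 3)]
    have b5r : x 5 ≤ 2 := by nlinarith [q5, mul_self_nonneg (x 5 - 3)]
    have x6eq : x 6 = -(3 * x 0 + x 1 + x 2 + x 3 + x 4 + x 5) := by omega
    have hmem := key' (x 0) (x 1) (x 2) (x 3) (x 4) (x 5)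
      b0l b0r b1l b1r b2l b2r b3l b3r b4l b4r b5l b5r
      (by rw [← x6eq]; exact h')
    have hxeq : (![x 0, x 1, x 2, x 3, x 4, x 5,
        -(3 * x 0 + x 1 + x 2 + x 3 + x 4 + x 5)] : Fin 7 → ℤ) = x := by
      funext i
      fin_cases i
      · rfl
      · rfl
      · rfl
      · rfl
      · rfl
      · rfl
      · show -(3 * x 0 + x 1 + x 2 + x 3 + x 4 + x 5) = x 6; omega
    rw [hxeq] at hmem
    exact all_orbit x hmem
  · rintro ⟨w, hw, rfl⟩
    obtain ⟨hκ, hf⟩ := w6_inv w hw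
    constructor
    · exact (hf _ _).trans (by decide)
    · calc form (w (e 1 - e 2)) kappa = form (w (e 1 - e 2)) (w kappa) := by rw [hκ]
        _ = form (e 1 - e 2) kappa := hf _ _
        _ = 0 := by decide
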